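/- arXiv:2604.12554 — 2 statements merged into one kernel-verified Lean document; each statement's English description precedes it below -/
import Mathlib

section
/- Let H be a finite-dimensional Hopf algebra over k with invertible antipode S, basis {e_i}, dual basis {e^i}. In the Heisenberg double H(H*), the element W̃ = Σ_i (ε # S(e_i)) ⊗ (e^i # 1) is a two-sided inverse of the canonical element W = Σ_i (ε # e_i) ⊗ (e^i # 1), i.e. W·W̃ = W̃·W = (ε # 1) ⊗ (ε # 1). -/
open TensorProduct

noncomputable section

variable (k H : Type*) [CommRing k] [Ring H] [HopfAlgebra k H]

/-- The right action of `H` on `H*`: `(a ⇀ ν)(b) = ν(ba)`, as a bilinear map. -/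
def rActL : H →ₗ[k] Module.Dual k H →ₗ[k] Module.Dual k H :=
  LinearMap.mk₂ k (fun a ν => ν ∘ₗ LinearMap.mulRight k a)
    (fun a a' ν => by ext b; simp [mul_add])
    (fun c a ν => by ext b; simp [mul_smul_comm])
    (fun a ν ν' => by ext b; simp)
    (fun c a ν => by ext b; simp)

/-- `H ⊗ H* → H*`, `a ⊗ ν ↦ (a ⇀ ν)`. -/
def rActT : H ⊗[k] Module.Dual k H →ₗ[k] Module.Dual k H :=
  TensorProduct.lift (rActL k H)

/-- The convolution product on `H*`: `(ξ ∗ ν)(h) = Σ ξ(h₁)ν(h₂)`, as a bilinear map. -/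
def convL : Module.Dual k H →ₗ[k] Module.Dual k H →ₗ[k] Module.Dual k H :=
  LinearMap.mk₂ k
    (fun ξ ν => LinearMap.mul' k k ∘ₗ TensorProduct.map ξ ν ∘ₗ Coalgebra.comul)
    (fun ξ ξ' ν => by
      simp [TensorProduct.map_add_left, LinearMap.comp_add, LinearMap.add_comp])
    (fun c ξ ν => by
      simp [TensorProduct.map_smul_left, LinearMap.comp_smul, LinearMap.smul_comp])
    (fun ξ ν ν' => by
      simp [TensorProduct.map_add_right, LinearMap.comp_add, LinearMap.add_comp])
    (fun c ξ ν => by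
      simp [TensorProduct.map_smul_right, LinearMap.comp_smul, LinearMap.smul_comp])

/-- `H* ⊗ H* → H*`, convolution. -/
def convT : Module.Dual k H ⊗[k] Module.Dual k H →ₗ[k] Module.Dual k H :=
  TensorProduct.lift (convL k H)

/-- The underlying space of the Heisenberg double `H(H*) = H* # H`. -/
abbrev HD := Module.Dual k H ⊗[k] H

/-- The multiplication `(ξ # a)(ν # b) = Σ ξ ∗ (a₁ ⇀ ν) # a₂b` of the Heisenberg
double `H(H*)`, as a linear map on the tensor square. -/
def hmulT : HD k H ⊗[k] HD k H →ₗ[k] HD k H :=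
  TensorProduct.map (convT k H) LinearMap.id
    ∘ₗ (TensorProduct.assoc k (Module.Dual k H) (Module.Dual k H) H).symm.toLinearMap
    ∘ₗ TensorProduct.map LinearMap.id (TensorProduct.map (rActT k H) LinearMap.id)
    ∘ₗ TensorProduct.map LinearMap.id
        (TensorProduct.assoc k H (Module.Dual k H) H).symm.toLinearMap
    ∘ₗ (TensorProduct.assoc k (Module.Dual k H) H (Module.Dual k H ⊗[k] H)).toLinearMap
    ∘ₗ (TensorProduct.tensorTensorTensorComm k (Module.Dual k H) (Module.Dual k H) H H).toLinearMap
    ∘ₗ TensorProduct.map LinearMap.id (TensorProduct.map LinearMap.id (LinearMap.mul' k H))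
    ∘ₗ TensorProduct.map LinearMap.id (TensorProduct.assoc k H H H).toLinearMap
    ∘ₗ TensorProduct.map LinearMap.id (TensorProduct.map Coalgebra.comul LinearMap.id)
    ∘ₗ (TensorProduct.tensorTensorTensorComm k (Module.Dual k H) H (Module.Dual k H) H).toLinearMap

/-- The product of two elements of the Heisenberg double `H(H*)`. -/
def hmul (x y : HD k H) : HD k H := hmulT k H (x ⊗ₜ y)

/-- The unit `ε # 1` of the Heisenberg double. -/
def hone : HD k H := (Coalgebra.counit : Module.Dual k H) ⊗ₜ (1 : H)

/-- Componentwise multiplication on `H(H*) ⊗ H(H*)`. -/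
def hmul2T : (HD k H ⊗[k] HD k H) ⊗[k] (HD k H ⊗[k] HD k H) →ₗ[k] HD k H ⊗[k] HD k H :=
  TensorProduct.map (hmulT k H) (hmulT k H)
    ∘ₗ (TensorProduct.tensorTensorTensorComm k (HD k H) (HD k H) (HD k H) (HD k H)).toLinearMap

def hmul2 (x y : HD k H ⊗[k] HD k H) : HD k H ⊗[k] HD k H := hmul2T k H (x ⊗ₜ y)

/-- Componentwise multiplication on `H(H*) ⊗ H(H*) ⊗ H(H*)`. -/
def hmul3T :
    (HD k H ⊗[k] (HD k H ⊗[k] HD k H)) ⊗[k] (HD k H ⊗[k] (HD k H ⊗[k] HD k H)) →ₗ[k]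
      HD k H ⊗[k] (HD k H ⊗[k] HD k H) :=
  TensorProduct.map (hmulT k H) (hmul2T k H)
    ∘ₗ (TensorProduct.tensorTensorTensorComm k (HD k H) (HD k H ⊗[k] HD k H)
          (HD k H) (HD k H ⊗[k] HD k H)).toLinearMap

def hmul3 (x y : HD k H ⊗[k] (HD k H ⊗[k] HD k H)) :
    HD k H ⊗[k] (HD k H ⊗[k] HD k H) := hmul3T k H (x ⊗ₜ y)

/-- The embedding of `H(H*)⊗²` in legs 1,2 of the triple tensor power. -/
def leg12 : HD k H ⊗[k] HD k H →ₗ[k] HD k H ⊗[k] (HD k H ⊗[k] HD k H) :=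
  TensorProduct.map LinearMap.id
    ((TensorProduct.mk k (HD k H) (HD k H)).flip (hone k H))

/-- The embedding of `H(H*)⊗²` in legs 1,3 of the triple tensor power. -/
def leg13 : HD k H ⊗[k] HD k H →ₗ[k] HD k H ⊗[k] (HD k H ⊗[k] HD k H) :=
  TensorProduct.map LinearMap.id (TensorProduct.mk k (HD k H) (HD k H) (hone k H))

/-- The embedding of `H(H*)⊗²` in legs 2,3 of the triple tensor power. -/
def leg23 : HD k H ⊗[k] HD k H →ₗ[k] HD k H ⊗[k] (HD k H ⊗[k] HD k H) :=
  TensorProduct.mk k (HD k H) (HD k H ⊗[k] HD k H) (hone k H)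

/-- The canonical element `W = Σ_i (ε # e_i) ⊗ (e^i # 1)`. -/
def canW {I : Type*} [Fintype I] (B : Module.Basis I k H) : HD k H ⊗[k] HD k H :=
  ∑ i : I, ((Coalgebra.counit : Module.Dual k H) ⊗ₜ B i) ⊗ₜ ((B.coord i) ⊗ₜ (1 : H))

end


noncomputable section AuxProofs

open TensorProduct Coalgebra

set_option maxHeartbeats 1000000
set_option synthInstance.maxHeartbeats 400000
variable {k H : Type*} [CommRing k] [Ring H] [HopfAlgebra k H]

lemma hmul_tmul (ξ ν : Module.Dual k H) (a b : H) :
    hmul k H (ξ ⊗ₜ a) (ν ⊗ₜ b) =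
      TensorProduct.map (convL k H ξ ∘ₗ (rActL k H).flip ν) (LinearMap.mulRight k b)
        (Coalgebra.comul a) := by
  rw [hmul, hmulT]
  simp only [LinearMap.coe_comp, Function.comp_apply, LinearEquiv.coe_coe,
    tensorTensorTensorComm_tmul, map_tmul, LinearMap.id_coe, id_eq]
  induction Coalgebra.comul (R := k) a using TensorProduct.induction_on with
  | zero => simp
  | tmul x y =>
      simp [assoc_tmul, assoc_symm_tmul, convT, rActT, lift.tmul,
        LinearMap.mul'_apply, LinearMap.mulRight_apply, rActL]
  | add u v hu hv => simp only [add_tmul, map_add, tmul_add, hu, hv]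

lemma sum_counit_smul {a : H} (repr : Coalgebra.Repr k a (H × H)) :
    ∑ i ∈ repr.index, Coalgebra.counit (R := k) (repr.left i) • repr.right i = a := by
  have := congrArg (TensorProduct.lid k H) (Coalgebra.sum_counit_tmul_eq repr)
  simp only [map_sum, TensorProduct.lid_tmul, one_smul] at this
  exact this

lemma convL_repr (ξ ν : Module.Dual k H) (h : H) (repr : Coalgebra.Repr k h (H × H)) :
    convL k H ξ ν h = ∑ i ∈ repr.index, ξ (repr.left i) * ν (repr.right i) := by
  simp only [convL, LinearMap.mk₂_apply, LinearMap.coe_comp, Function.comp_apply]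
  rw [← repr.eq]
  simp [map_sum, LinearMap.mul'_apply]

lemma convL_counit_left (ν : Module.Dual k H) :
    convL k H (Coalgebra.counit : Module.Dual k H) ν = ν := by
  ext h
  rw [convL_repr _ _ h (Coalgebra.Repr.arbitrary k h)]
  calc ∑ i ∈ (Coalgebra.Repr.arbitrary k h).index,
        Coalgebra.counit (R := k) ((Coalgebra.Repr.arbitrary k h).left i) *
          ν ((Coalgebra.Repr.arbitrary k h).right i)
      = ν (∑ i ∈ (Coalgebra.Repr.arbitrary k h).index,
            Coalgebra.counit (R := k) ((Coalgebra.Repr.arbitrary k h).left i) •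
              (Coalgebra.Repr.arbitrary k h).right i) := by
        simp [map_sum, smul_eq_mul]
    _ = ν h := by rw [_root_.sum_counit_smul]

lemma rActL_counit (a : H) :
    rActL k H a (Coalgebra.counit : Module.Dual k H) =
      Coalgebra.counit (R := k) a • (Coalgebra.counit : Module.Dual k H) := by
  ext b
  simp [rActL, Bialgebra.counit_mul, smul_eq_mul, mul_comm]

/-- `(ε # a)(ε # b) = ε # ab`. -/
lemma hmul_counit_tmul (a b : H) :
    hmul k H ((Coalgebra.counit : Module.Dual k H) ⊗ₜ a)
        ((Coalgebra.counit : Module.Dual k H) ⊗ₜ b) =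
      (Coalgebra.counit : Module.Dual k H) ⊗ₜ (a * b) := by
  rw [hmul_tmul, ← (Coalgebra.Repr.arbitrary k a).eq, map_sum]
  simp only [map_tmul, LinearMap.coe_comp, Function.comp_apply, LinearMap.flip_apply,
    rActL_counit, map_smul, convL_counit_left, LinearMap.mulRight_apply,
    TensorProduct.smul_tmul, ← TensorProduct.tmul_sum, ← smul_mul_assoc, ← Finset.sum_mul,
    _root_.sum_counit_smul]

/-- `(φ # 1)(ψ # 1) = φ∗ψ # 1`. -/
lemma hmul_tmul_one (φ ψ : Module.Dual k H) :
    hmul k H (φ ⊗ₜ 1) (ψ ⊗ₜ 1) = convL k H φ ψ ⊗ₜ 1 := by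
  rw [hmul_tmul, Bialgebra.comul_one, Algebra.TensorProduct.one_def]
  have : rActL k H 1 ψ = ψ := by ext b; simp [rActL]
  simp [this, map_tmul]

lemma hmul2T_tmul (x y z w : HD k H) :
    hmul2T k H ((x ⊗ₜ y) ⊗ₜ (z ⊗ₜ w)) = hmul k H x z ⊗ₜ hmul k H y w := by
  simp [hmul2T, hmul, tensorTensorTensorComm_tmul]

/-- `Σᵢⱼ (e^i ∗ e^j) ⊗ (f i * g j) = ε ⊗ 1` whenever `Σₛ f(h₍₁₎) g(h₍₂₎)`-style
pairing holds; stated for the two antipode choices below. -/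
lemma key_sum {I : Type*} [Fintype I] (B : Module.Basis I k H) (f g : H →ₗ[k] H)
    (hfg : ∀ h : H,
      LinearMap.mul' k H (TensorProduct.map f g (Coalgebra.comul h)) =
        Coalgebra.counit (R := k) h • 1) :
    ∑ i : I, ∑ j : I, convL k H (B.coord i) (B.coord j) ⊗ₜ[k] (f (B i) * g (B j)) =
      (Coalgebra.counit : Module.Dual k H) ⊗ₜ[k] (1 : H) := by
  classical
  apply (dualTensorHomEquivOfBasis (N := H) B).injective
  simp only [dualTensorHomEquivOfBasis_apply, map_sum]
  ext h
  simp only [LinearMap.coe_sum, Finset.sum_apply, dualTensorHom_apply]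
  set r := Coalgebra.Repr.arbitrary k h with hr
  calc ∑ i : I, ∑ j : I, convL k H (B.coord i) (B.coord j) h • (f (B i) * g (B j))
      = ∑ i : I, ∑ j : I, ∑ s ∈ r.index,
          (B.coord i (r.left s) * B.coord j (r.right s)) • (f (B i) * g (B j)) := by
        refine Finset.sum_congr rfl fun i _ => Finset.sum_congr rfl fun j _ => ?_
        rw [convL_repr _ _ h r, Finset.sum_smul]
    _ = ∑ i : I, ∑ s ∈ r.index, ∑ j : I,
          (B.coord i (r.left s) * B.coord j (r.right s)) • (f (B i) * g (B j)) :=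
        Finset.sum_congr rfl fun i _ => Finset.sum_comm
    _ = ∑ s ∈ r.index, ∑ i : I, ∑ j : I,
          (B.coord i (r.left s) * B.coord j (r.right s)) • (f (B i) * g (B j)) :=
        Finset.sum_comm
    _ = ∑ s ∈ r.index, f (r.left s) * g (r.right s) := by
        refine Finset.sum_congr rfl fun s _ => ?_
        calc ∑ i : I, ∑ j : I,
              (B.coord i (r.left s) * B.coord j (r.right s)) • (f (B i) * g (B j))
            = (∑ i : I, B.coord i (r.left s) • f (B i)) *
                (∑ j : I, B.coord j (r.right s) • g (B j)) := by
              rw [Finset.sum_mul_sum]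
              refine Finset.sum_congr rfl fun i _ => Finset.sum_congr rfl fun j _ => ?_
              rw [smul_mul_smul_comm]
          _ = f (r.left s) * g (r.right s) := by
              congr 1
              · simp only [Module.Basis.coord_apply, ← map_smul, ← map_sum, Module.Basis.sum_repr]
              · simp only [Module.Basis.coord_apply, ← map_smul, ← map_sum, Module.Basis.sum_repr]
    _ = LinearMap.mul' k H (TensorProduct.map f g (Coalgebra.comul h)) := by
        rw [← r.eq]
        simp [map_sum, LinearMap.mul'_apply]
    _ = Coalgebra.counit (R := k) h • 1 := hfg h

lemma hfg_id_antipode (h : H) :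
    LinearMap.mul' k H (TensorProduct.map (LinearMap.id : H →ₗ[k] H)
        (HopfAlgebra.antipode (R := k) : H →ₗ[k] H) (Coalgebra.comul h)) =
      Coalgebra.counit (R := k) h • 1 := by
  have e : TensorProduct.map (LinearMap.id : H →ₗ[k] H)
      (HopfAlgebra.antipode (R := k) : H →ₗ[k] H) =
      (HopfAlgebra.antipode (R := k) : H →ₗ[k] H).lTensor H := rfl
  rw [e, HopfAlgebra.mul_antipode_lTensor_comul_apply, Algebra.algebraMap_eq_smul_one]

lemma hfg_antipode_id (h : H) :
    LinearMap.mul' k H (TensorProduct.map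
        (HopfAlgebra.antipode (R := k) : H →ₗ[k] H) (LinearMap.id : H →ₗ[k] H)
        (Coalgebra.comul h)) =
      Coalgebra.counit (R := k) h • 1 := by
  have e : TensorProduct.map (HopfAlgebra.antipode (R := k) : H →ₗ[k] H)
      (LinearMap.id : H →ₗ[k] H) =
      (HopfAlgebra.antipode (R := k) : H →ₗ[k] H).rTensor H := rfl
  rw [e, HopfAlgebra.mul_antipode_rTensor_comul_apply, Algebra.algebraMap_eq_smul_one]

/-- The auxiliary embedding `φ ⊗ x ↦ (ε # x) ⊗ (φ # 1)`. -/
def auxF : Module.Dual k H ⊗[k] H →ₗ[k] HD k H ⊗[k] HD k H :=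
  TensorProduct.map ((TensorProduct.mk k (Module.Dual k H) H) Coalgebra.counit)
      ((TensorProduct.mk k (Module.Dual k H) H).flip 1)
    ∘ₗ (TensorProduct.comm k (Module.Dual k H) H).toLinearMap

lemma main_step {I : Type*} [Fintype I] (B : Module.Basis I k H) (f g : H →ₗ[k] H)
    (hfg : ∀ h : H,
      LinearMap.mul' k H (TensorProduct.map f g (Coalgebra.comul h)) =
        Coalgebra.counit (R := k) h • 1) :
    hmul2 k H
        (∑ i : I, ((Coalgebra.counit : Module.Dual k H) ⊗ₜ f (B i)) ⊗ₜ (B.coord i ⊗ₜ (1 : H)))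
        (∑ j : I, ((Coalgebra.counit : Module.Dual k H) ⊗ₜ g (B j)) ⊗ₜ (B.coord j ⊗ₜ (1 : H)))
      = hone k H ⊗ₜ hone k H := by
  rw [hmul2]
  rw [TensorProduct.sum_tmul]
  rw [map_sum]
  calc ∑ i : I, hmul2T k H
          ((((Coalgebra.counit : Module.Dual k H) ⊗ₜ f (B i)) ⊗ₜ (B.coord i ⊗ₜ (1 : H))) ⊗ₜ
            (∑ j : I, ((Coalgebra.counit : Module.Dual k H) ⊗ₜ g (B j)) ⊗ₜ (B.coord j ⊗ₜ (1 : H))))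
      = ∑ i : I, ∑ j : I,
          ((Coalgebra.counit : Module.Dual k H) ⊗ₜ (f (B i) * g (B j))) ⊗ₜ
            (convL k H (B.coord i) (B.coord j) ⊗ₜ (1 : H)) := by
        refine Finset.sum_congr rfl fun i _ => ?_
        rw [TensorProduct.tmul_sum, map_sum]
        refine Finset.sum_congr rfl fun j _ => ?_
        rw [hmul2T_tmul, hmul_counit_tmul, hmul_tmul_one]
    _ = auxF (∑ i : I, ∑ j : I,
          convL k H (B.coord i) (B.coord j) ⊗ₜ[k] (f (B i) * g (B j))) := by
        simp only [map_sum, auxF, LinearMap.coe_comp, Function.comp_apply, LinearEquiv.coe_coe,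
          TensorProduct.comm_tmul, map_tmul, TensorProduct.mk_apply, LinearMap.flip_apply]
    _ = auxF ((Coalgebra.counit : Module.Dual k H) ⊗ₜ[k] (1 : H)) := by
        rw [key_sum B f g hfg]
    _ = hone k H ⊗ₜ hone k H := by
        simp [auxF, hone]

end AuxProofs

/-- in the Heisenberg double `H(H*)` of a finite-dimensional Hopf
algebra with invertible antipode `S`, `W̃ = Σ_i (ε # S(e_i)) ⊗ (e^i # 1)` is a
two-sided inverse of the canonical element `W = Σ_i (ε # e_i) ⊗ (e^i # 1)`. -/
theorem stmt_10 {k H : Type*} [Field k] [Ring H] [HopfAlgebra k H]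
    {I : Type*} [Fintype I] (B : Module.Basis I k H)
    (hS : Function.Bijective (HopfAlgebra.antipode (R := k) (A := H))) :
    hmul2 k H (canW k H B)
      (∑ i : I, ((Coalgebra.counit : Module.Dual k H) ⊗ₜ
          HopfAlgebra.antipode (R := k) (B i)) ⊗ₜ ((B.coord i) ⊗ₜ (1 : H)))
      = hone k H ⊗ₜ hone k H ∧
    hmul2 k H
      (∑ i : I, ((Coalgebra.counit : Module.Dual k H) ⊗ₜ
          HopfAlgebra.antipode (R := k) (B i)) ⊗ₜ ((B.coord i) ⊗ₜ (1 : H)))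
      (canW k H B)
      = hone k H ⊗ₜ hone k H := by
  constructor
  · have := main_step B LinearMap.id (HopfAlgebra.antipode (R := k)) hfg_id_antipode
    simpa [canW] using this
  · have := main_step B (HopfAlgebra.antipode (R := k)) LinearMap.id hfg_antipode_id
    simpa [canW] using this
end

section
/- Let G be a finite group and ω a normalized 3-cocycle. In the twisted Heisenberg double H₁^ω(G*), the canonical element W = Σ_g (1 # δ_g) ⊗ (g # 1) and its quasi-inverse W̃ = Σ_{a,b} ω(b⁻¹a,a⁻¹,b)⁻¹ (1 # δ_a) ⊗ (a⁻¹ # δ_b) satisfy the quasi-Hopf equation W̃₂₃ W̃₁₃ W̃₁₂ = Φ_S^{321} W̃₁₂ W̃₂₃, where Φ_S^{321} = Σ_{a,b,c} ω(c⁻¹,b⁻¹,a⁻¹)⁻¹ (1#δ_a) ⊗ (1#δ_b) ⊗ (1#δ_c). -/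
open Finset

/-- Structure constants of the twisted Heisenberg double `H₁^ω(G*)`:
`(g # δ_a)(h # δ_b) = [a = h*b] · ω(g,h,b) · (gh # δ_b)`.
A pair `(g, a)` encodes the basis element `g # δ_a`. -/
def mA {G : Type*} [Group G] [DecidableEq G] {k : Type*} [Field k]
    (ω : G → G → G → kˣ) (p q r : G × G) : k :=
  if p.2 = q.1 * q.2 ∧ r = (p.1 * q.1, q.2) then (ω p.1 q.1 q.2 : k) else 0

/-- The bilinear multiplication of `H₁^ω(G*)` on the free module `G × G → k`. -/
def mulA {G : Type*} [Group G] [Fintype G] [DecidableEq G] {k : Type*} [Field k]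
    (ω : G → G → G → kˣ) (x y : G × G → k) : G × G → k :=
  fun r => ∑ p : G × G, ∑ q : G × G, x p * y q * mA ω p q r

/-- Componentwise multiplication on the tensor square of `H₁^ω(G*)`. -/
def mulA2 {G : Type*} [Group G] [Fintype G] [DecidableEq G] {k : Type*} [Field k]
    (ω : G → G → G → kˣ) (x y : (G × G) × (G × G) → k) : (G × G) × (G × G) → k :=
  fun r => ∑ p : (G × G) × (G × G), ∑ q : (G × G) × (G × G),
    x p * y q * mA ω p.1 q.1 r.1 * mA ω p.2 q.2 r.2

/-- Componentwise multiplication on the tensor cube of `H₁^ω(G*)`. -/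
def mulA3 {G : Type*} [Group G] [Fintype G] [DecidableEq G] {k : Type*} [Field k]
    (ω : G → G → G → kˣ) (x y : (G × G) × (G × G) × (G × G) → k) :
    (G × G) × (G × G) × (G × G) → k :=
  fun r => ∑ p : (G × G) × (G × G) × (G × G), ∑ q : (G × G) × (G × G) × (G × G),
    x p * y q * mA ω p.1 q.1 r.1 * mA ω p.2.1 q.2.1 r.2.1 * mA ω p.2.2 q.2.2 r.2.2

/-- The unit `1_G # Σ_a δ_a` of `H₁^ω(G*)`. -/
def unitA {G : Type*} [Group G] [DecidableEq G] (k : Type*) [Field k] :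
    G × G → k :=
  fun p => if p.1 = 1 then 1 else 0

/-- The canonical element `W = Σ_g (1_G # δ_g) ⊗ (g # Σ_a δ_a)` of `H₁^ω(G*)⊗²`. -/
def WA {G : Type*} [Group G] [DecidableEq G] (k : Type*) [Field k] :
    (G × G) × (G × G) → k :=
  fun pq => if pq.1.1 = 1 ∧ pq.2.1 = pq.1.2 then 1 else 0

/-- The quasi-inverse `W̃ = Σ_{a,b} ω(b⁻¹a,a⁻¹,b)⁻¹ (1 # δ_a) ⊗ (a⁻¹ # δ_b)`. -/
def WtA {G : Type*} [Group G] [DecidableEq G] (k : Type*) [Field k]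
    (ω : G → G → G → kˣ) : (G × G) × (G × G) → k :=
  fun pq => if pq.1.1 = 1 ∧ pq.2.1 = pq.1.2⁻¹ then
      (((ω (pq.2.2⁻¹ * pq.1.2) pq.1.2⁻¹ pq.2.2)⁻¹ : kˣ) : k)
    else 0

lemma mA_eq {G : Type*} [Group G] [DecidableEq G] {k : Type*} [Field k]
    (ω : G → G → G → kˣ) (p q r : G × G) :
    mA ω p q r = if q.1 = p.1⁻¹ * r.1 ∧ q.2 = r.2 ∧ p.2 = p.1⁻¹ * r.1 * r.2
      then (ω p.1 (p.1⁻¹ * r.1) r.2 : k) else 0 := by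
  rcases p with ⟨p1, p2⟩; rcases q with ⟨q1, q2⟩; rcases r with ⟨r1, r2⟩
  unfold mA
  simp only [Prod.mk.injEq]
  split_ifs with h h' h'
  · obtain ⟨-, h3, h4⟩ := h
    subst h3 h4; simp
  · obtain ⟨h1, h3, h4⟩ := h
    subst h3 h4
    exact absurd ⟨by simp, rfl, by rw [h1]; simp [mul_assoc]⟩ h'
  · obtain ⟨h1, h2, h3⟩ := h'
    subst h1 h2 h3
    exact absurd ⟨by simp [mul_assoc], by simp, rfl⟩ h
  · rfl

set_option maxHeartbeats 1000000 in
lemma T_eval {G : Type*} [Group G] [Fintype G] [DecidableEq G] {k : Type*} [Field k]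
    (ω : G → G → G → kˣ)
    (hnorm : ∀ a b c : G, a = 1 ∨ b = 1 ∨ c = 1 → ω a b c = 1) :
    mulA3 ω
      (fun pqr => unitA k pqr.1 * WtA k ω (pqr.2.1, pqr.2.2))
      (fun pqr => WtA k ω (pqr.1, pqr.2.2) * unitA k pqr.2.1)
    = fun r => if r.1.1 = 1 ∧ r.2.1.1 = 1 ∧ r.2.2.1 = r.2.1.2⁻¹ * r.1.2⁻¹ then
        (((ω ((r.1.2⁻¹ * r.2.2.2)⁻¹ * r.2.1.2) r.2.1.2⁻¹ (r.1.2⁻¹ * r.2.2.2))⁻¹ : kˣ) : k)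
        * (((ω (r.2.2.2⁻¹ * r.1.2) r.1.2⁻¹ r.2.2.2)⁻¹ : kˣ) : k)
        * ((ω r.2.1.2⁻¹ r.1.2⁻¹ r.2.2.2 : kˣ) : k)
      else 0 := by
  funext r
  obtain ⟨⟨r11, r12⟩, ⟨r21, r22⟩, ⟨r31, r32⟩⟩ := r
  simp only [mulA3, mA_eq, unitA, WtA, Fintype.sum_prod_type, mul_ite, ite_mul, zero_mul,
    mul_zero, one_mul, mul_one, ite_and, Finset.sum_ite_eq, Finset.sum_ite_eq',
    Finset.mem_univ, if_true, Finset.sum_ite_irrel, Finset.sum_const_zero]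
  simp only [inv_mul_eq_one, mul_inv_eq_one, inv_mul_eq_iff_eq_mul, eq_mul_inv_iff_mul_eq,
    eq_inv_mul_iff_mul_eq, inv_inv, one_mul, mul_one, ite_and, mul_ite, ite_mul, zero_mul,
    mul_zero, Finset.sum_ite_eq, Finset.sum_ite_eq', Finset.mem_univ, if_true,
    Finset.sum_ite_irrel, Finset.sum_const_zero, inv_mul_cancel, mul_inv_cancel,
    inv_mul_cancel_left, mul_inv_cancel_left]
  split_ifs with h1 h2 h3 <;> try rfl
  obtain rfl : r31 = r22⁻¹ * r12⁻¹ := eq_mul_inv_iff_mul_eq.mpr h2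
  subst h1 h3
  simp [hnorm, mul_assoc, mul_inv_cancel_left, inv_mul_cancel_left, mul_inv_rev, inv_inv]

set_option maxHeartbeats 2000000 in
lemma L_eval {G : Type*} [Group G] [Fintype G] [DecidableEq G] {k : Type*} [Field k]
    (ω : G → G → G → kˣ)
    (hnorm : ∀ a b c : G, a = 1 ∨ b = 1 ∨ c = 1 → ω a b c = 1) :
    mulA3 ω
      (fun r => if r.1.1 = 1 ∧ r.2.1.1 = 1 ∧ r.2.2.1 = r.2.1.2⁻¹ * r.1.2⁻¹ then
        (((ω ((r.1.2⁻¹ * r.2.2.2)⁻¹ * r.2.1.2) r.2.1.2⁻¹ (r.1.2⁻¹ * r.2.2.2))⁻¹ : kˣ) : k)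
        * (((ω (r.2.2.2⁻¹ * r.1.2) r.1.2⁻¹ r.2.2.2)⁻¹ : kˣ) : k)
        * ((ω r.2.1.2⁻¹ r.1.2⁻¹ r.2.2.2 : kˣ) : k)
      else 0)
      (fun pqr => WtA k ω (pqr.1, pqr.2.1) * unitA k pqr.2.2)
    = fun r => if r.1.1 = 1 ∧ r.2.1.1 = r.1.2⁻¹ ∧ r.2.2.1 = r.2.1.2⁻¹ then
        (((ω (r.2.2.2⁻¹ * r.2.1.2) (r.2.1.2⁻¹ * r.1.2) (r.1.2⁻¹ * r.2.2.2))⁻¹ : kˣ) : k)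
        * (((ω (r.2.2.2⁻¹ * r.1.2) r.1.2⁻¹ r.2.2.2)⁻¹ : kˣ) : k)
        * ((ω (r.2.1.2⁻¹ * r.1.2) r.1.2⁻¹ r.2.2.2 : kˣ) : k)
        * (((ω (r.2.1.2⁻¹ * r.1.2) r.1.2⁻¹ r.2.1.2)⁻¹ : kˣ) : k)
      else 0 := by
  funext r
  obtain ⟨⟨r11, r12⟩, ⟨r21, r22⟩, ⟨r31, r32⟩⟩ := r
  simp only [mulA3, mA_eq, unitA, WtA, Fintype.sum_prod_type, mul_ite, ite_mul, zero_mul,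
    mul_zero, one_mul, mul_one, ite_and, Finset.sum_ite_eq, Finset.sum_ite_eq',
    Finset.mem_univ, if_true, Finset.sum_ite_irrel, Finset.sum_const_zero]
  simp only [inv_mul_eq_one, mul_inv_eq_one, inv_mul_eq_iff_eq_mul, eq_mul_inv_iff_mul_eq,
    eq_inv_mul_iff_mul_eq, inv_inv, one_mul, mul_one, ite_and, mul_ite, ite_mul, zero_mul,
    mul_zero, Finset.sum_ite_eq, Finset.sum_ite_eq', Finset.mem_univ, if_true,
    Finset.sum_ite_irrel, Finset.sum_const_zero, inv_mul_cancel, mul_inv_cancel,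
    inv_mul_cancel_left, mul_inv_cancel_left]
  by_cases h2 : r21 = r12⁻¹
  · subst h2
    by_cases h3 : r31 = r22⁻¹
    · subst h3
      by_cases h1 : r11 = 1
      · subst h1
        simp [hnorm, mul_assoc, inv_mul_cancel_left, mul_inv_cancel_left, mul_inv_rev,
          inv_inv, inv_mul_cancel, mul_inv_cancel]
      · simp [h1]
    · simp [h3, mul_left_inj, inv_mul_cancel_left, mul_inv_rev, inv_inv, mul_assoc,
        inv_mul_cancel, one_mul, inv_mul_cancel_left]
  · simp [h2, mul_eq_one_iff_eq_inv]

set_option maxHeartbeats 2000000 in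
lemma S_eval {G : Type*} [Group G] [Fintype G] [DecidableEq G] {k : Type*} [Field k]
    (ω : G → G → G → kˣ)
    (hnorm : ∀ a b c : G, a = 1 ∨ b = 1 ∨ c = 1 → ω a b c = 1) :
    mulA3 ω
      (fun pqr =>
        if pqr.1.1 = 1 ∧ pqr.2.1.1 = 1 ∧ pqr.2.2.1 = 1 then
          (((ω pqr.2.2.2⁻¹ pqr.2.1.2⁻¹ pqr.1.2⁻¹)⁻¹ : kˣ) : k)
        else 0)
      (fun pqr => WtA k ω (pqr.1, pqr.2.1) * unitA k pqr.2.2)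
    = fun r => if r.1.1 = 1 ∧ r.2.1.1 = r.1.2⁻¹ ∧ r.2.2.1 = 1 then
        (((ω r.2.2.2⁻¹ (r.2.1.2⁻¹ * r.1.2) r.1.2⁻¹)⁻¹ : kˣ) : k)
        * (((ω (r.2.1.2⁻¹ * r.1.2) r.1.2⁻¹ r.2.1.2)⁻¹ : kˣ) : k)
      else 0 := by
  funext r
  obtain ⟨⟨r11, r12⟩, ⟨r21, r22⟩, ⟨r31, r32⟩⟩ := r
  simp only [mulA3, mA_eq, unitA, WtA, Fintype.sum_prod_type, mul_ite, ite_mul, zero_mul,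
    mul_zero, one_mul, mul_one, ite_and, Finset.sum_ite_eq, Finset.sum_ite_eq',
    Finset.mem_univ, if_true, Finset.sum_ite_irrel, Finset.sum_const_zero]
  simp only [inv_mul_eq_one, mul_inv_eq_one, inv_mul_eq_iff_eq_mul, eq_mul_inv_iff_mul_eq,
    eq_inv_mul_iff_mul_eq, inv_inv, one_mul, mul_one, ite_and, mul_ite, ite_mul, zero_mul,
    mul_zero, Finset.sum_ite_eq, Finset.sum_ite_eq', Finset.mem_univ, if_true,
    Finset.sum_ite_irrel, Finset.sum_const_zero, inv_mul_cancel, mul_inv_cancel,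
    inv_mul_cancel_left, mul_inv_cancel_left]
  by_cases h2 : r21 = r12⁻¹
  · subst h2
    simp [hnorm, mul_assoc, inv_mul_cancel_left, mul_inv_cancel_left, mul_inv_rev,
      inv_inv, inv_mul_cancel, mul_inv_cancel]
  · simp [h2, mul_eq_one_iff_eq_inv]

set_option maxHeartbeats 2000000 in
lemma R_eval {G : Type*} [Group G] [Fintype G] [DecidableEq G] {k : Type*} [Field k]
    (ω : G → G → G → kˣ)
    (hnorm : ∀ a b c : G, a = 1 ∨ b = 1 ∨ c = 1 → ω a b c = 1) :
    mulA3 ω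
      (fun r => if r.1.1 = 1 ∧ r.2.1.1 = r.1.2⁻¹ ∧ r.2.2.1 = 1 then
        (((ω r.2.2.2⁻¹ (r.2.1.2⁻¹ * r.1.2) r.1.2⁻¹)⁻¹ : kˣ) : k)
        * (((ω (r.2.1.2⁻¹ * r.1.2) r.1.2⁻¹ r.2.1.2)⁻¹ : kˣ) : k)
      else 0)
      (fun pqr => unitA k pqr.1 * WtA k ω (pqr.2.1, pqr.2.2))
    = fun r => if r.1.1 = 1 ∧ r.2.1.1 = r.1.2⁻¹ ∧ r.2.2.1 = r.2.1.2⁻¹ then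
        (((ω (r.2.2.2⁻¹ * r.2.1.2) (r.2.1.2⁻¹ * r.1.2) r.1.2⁻¹)⁻¹ : kˣ) : k)
        * (((ω (r.2.1.2⁻¹ * r.1.2) r.1.2⁻¹ r.2.1.2)⁻¹ : kˣ) : k)
        * (((ω (r.2.2.2⁻¹ * r.2.1.2) r.2.1.2⁻¹ r.2.2.2)⁻¹ : kˣ) : k)
      else 0 := by
  funext r
  obtain ⟨⟨r11, r12⟩, ⟨r21, r22⟩, ⟨r31, r32⟩⟩ := r
  simp only [mulA3, mA_eq, unitA, WtA, Fintype.sum_prod_type, mul_ite, ite_mul, zero_mul,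
    mul_zero, one_mul, mul_one, ite_and, Finset.sum_ite_eq, Finset.sum_ite_eq',
    Finset.mem_univ, if_true, Finset.sum_ite_irrel, Finset.sum_const_zero]
  simp only [inv_mul_eq_one, mul_inv_eq_one, inv_mul_eq_iff_eq_mul, eq_mul_inv_iff_mul_eq,
    eq_inv_mul_iff_mul_eq, inv_inv, one_mul, mul_one, ite_and, mul_ite, ite_mul, zero_mul,
    mul_zero, Finset.sum_ite_eq, Finset.sum_ite_eq', Finset.mem_univ, if_true,
    Finset.sum_ite_irrel, Finset.sum_const_zero, inv_mul_cancel, mul_inv_cancel,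
    inv_mul_cancel_left, mul_inv_cancel_left]
  by_cases h3 : r31 = r22⁻¹
  · subst h3
    simp [hnorm, mul_assoc, inv_mul_cancel_left, mul_inv_cancel_left, mul_inv_rev,
      inv_inv, inv_mul_cancel, mul_inv_cancel]
  · simp [h3, mul_eq_one_iff_eq_inv]



/-- the quasi-Hopf equation `W̃₂₃ W̃₁₃ W̃₁₂ = Φ_S^{321} W̃₁₂ W̃₂₃`
in `H₁^ω(G*)^{⊗3}`. -/
theorem stmt_19 {G : Type*} [Group G] [Fintype G] [DecidableEq G] {k : Type*} [Field k]
    (ω : G → G → G → kˣ)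
    (hcoc : ∀ a b c d : G,
      ω a b c * ω a (b * c) d * ω b c d = ω (a * b) c d * ω a b (c * d))
    (hnorm : ∀ a b c : G, a = 1 ∨ b = 1 ∨ c = 1 → ω a b c = 1) :
    mulA3 ω
      (mulA3 ω
        (fun pqr => unitA k pqr.1 * WtA k ω (pqr.2.1, pqr.2.2))    -- W̃₂₃
        (fun pqr => WtA k ω (pqr.1, pqr.2.2) * unitA k pqr.2.1))   -- W̃₁₃
      (fun pqr => WtA k ω (pqr.1, pqr.2.1) * unitA k pqr.2.2)      -- W̃₁₂
    = mulA3 ω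
        (mulA3 ω
          (fun pqr =>                                              -- Φ_S^{321}
            if pqr.1.1 = 1 ∧ pqr.2.1.1 = 1 ∧ pqr.2.2.1 = 1 then
              (((ω pqr.2.2.2⁻¹ pqr.2.1.2⁻¹ pqr.1.2⁻¹)⁻¹ : kˣ) : k)
            else 0)
          (fun pqr => WtA k ω (pqr.1, pqr.2.1) * unitA k pqr.2.2)) -- W̃₁₂
        (fun pqr => unitA k pqr.1 * WtA k ω (pqr.2.1, pqr.2.2)) := by  -- W̃₂₃
  rw [T_eval ω hnorm, L_eval ω hnorm, S_eval ω hnorm, R_eval ω hnorm]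
  funext r
  obtain ⟨⟨r11, r12⟩, ⟨r21, r22⟩, ⟨r31, r32⟩⟩ := r
  simp only []
  split_ifs with h
  · have key := hcoc (r32⁻¹ * r22) (r22⁻¹ * r12) r12⁻¹ r32
    simp only [mul_assoc, mul_inv_cancel_left, inv_mul_cancel_left, mul_inv_cancel, mul_one] at key
    set A := ω (r32⁻¹ * r22) (r22⁻¹ * r12) r12⁻¹
    set B := ω (r32⁻¹ * r22) r22⁻¹ r32
    set C := ω (r22⁻¹ * r12) r12⁻¹ r32
    set D := ω (r32⁻¹ * r12) r12⁻¹ r32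
    set E := ω (r32⁻¹ * r22) (r22⁻¹ * r12) (r12⁻¹ * r32)
    set F := ω (r22⁻¹ * r12) r12⁻¹ r22
    have key2 : E⁻¹ * D⁻¹ * C * F⁻¹ = A⁻¹ * F⁻¹ * B⁻¹ := by
      have h' : E⁻¹ * D⁻¹ = C⁻¹ * B⁻¹ * A⁻¹ := by
        rw [← mul_inv_rev, ← key]; simp [mul_inv_rev, mul_assoc]
      rw [h', mul_right_comm (C⁻¹ * B⁻¹) A⁻¹ C, mul_right_comm C⁻¹ B⁻¹ C,
        inv_mul_cancel, one_mul, mul_rotate]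
    exact_mod_cast congrArg Units.val key2
  · rfl
end
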